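/- Let G be a finite group and let (G,N) be an equal order pair. If X is a subgroup of G that is not contained in N and the intersection X ∩ N is nontrivial, then (X, X ∩ N) is an equal order pair (i.e., X ∩ N is a proper, nontrivial, normal subgroup of X and every element of X outside X ∩ N has the same order as every element of its coset modulo X ∩ N). -/
import Mathlib


/-- `(G, N)` is an *equal order pair* if `N` is a proper, nontrivial, normal subgroup of `G`
and for every `x ∈ G \ N` and every `n ∈ N`, the order of `x * n` equals the order of `x`. -/
def IsEqualOrderPair {G : Type*} [Group G] (N : Subgroup G) : Prop :=
  N.Normal ∧ N ≠ ⊥ ∧ N ≠ ⊤ ∧ ∀ x ∉ N, ∀ n ∈ N, orderOf (x * n) = orderOf x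

theorem stmt0 {G : Type*} [Group G] [Finite G] (N : Subgroup G)
    (hEOP : IsEqualOrderPair N) (X : Subgroup G) (hX : ¬ X ≤ N) (hXN : X ⊓ N ≠ ⊥) :
    IsEqualOrderPair (N.subgroupOf X) := by
  obtain ⟨hnorm, -, -, hord⟩ := hEOP
  refine ⟨hnorm.subgroupOf X, ?_, ?_, ?_⟩
  · intro h
    apply hXN
    rw [eq_bot_iff]
    rintro g ⟨hgX, hgN⟩
    have : (⟨g, hgX⟩ : X) ∈ N.subgroupOf X := hgN
    rw [h, Subgroup.mem_bot] at this
    simpa [Subgroup.mem_bot] using congrArg Subtype.val this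
  · intro h
    apply hX
    intro g hg
    have : (⟨g, hg⟩ : X) ∈ N.subgroupOf X := by rw [h]; trivial
    exact this
  · rintro ⟨x, hxX⟩ hx ⟨n, hnX⟩ hn
    have hxN : x ∉ N := hx
    have hnN : n ∈ N := hn
    rw [← Subgroup.orderOf_coe, ← Subgroup.orderOf_coe (⟨x, hxX⟩ : X)]
    exact hord x hxN n hnN
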